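/- Let p ∈ (0,1) and let (μ_i)_{i≥1} be a sequence of positive reals with μ_i = i^{-1/p}. Then for every λ ∈ (0,1], the series ∑_{i=1}^∞ μ_i/(μ_i + λ) converges and there is a constant C (depending only on p) such that ∑_{i=1}^∞ μ_i/(μ_i + λ) ≤ C λ^{-p}. -/

import Mathlib

open Real Finset

lemma bern {r t : ℝ} (hr : 0 < r) (ht : 0 < t) (ht1 : t ≤ 1) :
    1 + r * (1 - t) ≤ t ^ (-r) := by
  rw [Real.rpow_def_of_pos ht]
  have h1 : 1 + r * (1 - t) ≤ Real.exp (r * (1 - t)) := by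
    have := Real.add_one_le_exp (r * (1 - t)); linarith
  refine h1.trans (Real.exp_le_exp.mpr ?_)
  have hl : Real.log t ≤ t - 1 := Real.log_le_sub_one_of_pos ht
  nlinarith

lemma step {s : ℝ} (hs : 1 < s) {k : ℝ} (hk : 1 ≤ k) :
    (s - 1) * (k + 1) ^ (-s) ≤ k ^ (1 - s) - (k + 1) ^ (1 - s) := by
  have hk0 : 0 < k := by linarith
  have hk1 : (0:ℝ) < k + 1 := by linarith
  have ht : 0 < k / (k + 1) := div_pos hk0 hk1
  have ht1 : k / (k + 1) ≤ 1 := by rw [div_le_one hk1]; linarith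
  have hb := bern (r := s - 1) (t := k / (k+1)) (by linarith) ht ht1
  have hpow : (0:ℝ) < (k + 1) ^ (1 - s) := Real.rpow_pos_of_pos hk1 _
  have hmul := mul_le_mul_of_nonneg_right hb hpow.le
  have hR : (k / (k + 1)) ^ (-(s-1)) * (k + 1) ^ (1 - s) = k ^ (1 - s) := by
    rw [show -(s-1) = 1 - s by ring, ← Real.mul_rpow ht.le hk1.le,
      div_mul_cancel₀ _ (ne_of_gt hk1)]
  have hB : (k + 1) ^ (1 - s) = (k + 1) * (k + 1) ^ (-s) := by
    rw [show (1:ℝ) - s = 1 + -s by ring, Real.rpow_add hk1, Real.rpow_one]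
  rw [hR] at hmul
  have h1mt : 1 - k / (k + 1) = 1 / (k + 1) := by field_simp; ring
  rw [h1mt, hB] at hmul
  have : (1 + (s - 1) * (1 / (k + 1))) * ((k + 1) * (k + 1) ^ (-s))
      = (k+1) * (k+1)^(-s) + (s-1) * (k+1)^(-s) := by field_simp
  rw [this] at hmul
  rw [hB]; linarith


lemma tail_sum {s : ℝ} (hs : 1 < s) {N : ℕ} (hN : 1 ≤ N) (n : ℕ) :
    ∑ i ∈ Finset.range n, ((i + N + 1 : ℕ) : ℝ) ^ (-s) ≤ (N:ℝ) ^ (1 - s) / (s - 1) := by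
  have hs1 : (0:ℝ) < s - 1 := by linarith
  have key : (s-1) * ∑ i ∈ Finset.range n, ((i + N + 1 : ℕ):ℝ) ^ (-s)
      ≤ (N:ℝ) ^ (1-s) - ((N+n:ℕ):ℝ) ^ (1-s) := by
    induction n with
    | zero => simp
    | succ m ih =>
      rw [Finset.sum_range_succ, mul_add]
      have hk : (1:ℝ) ≤ ((N+m:ℕ):ℝ) := by
        have : 1 ≤ N + m := le_add_right hN
        exact_mod_cast this
      have hst := step hs hk
      have e1 : ((m + N + 1 : ℕ):ℝ) = ((N+m:ℕ):ℝ) + 1 := by push_cast; ring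
      have e2 : ((N + (m+1) : ℕ):ℝ) = ((N+m:ℕ):ℝ) + 1 := by push_cast; ring
      rw [e1, e2]
      linarith
  have hpos : (0:ℝ) ≤ ((N+n:ℕ):ℝ) ^ (1-s) := by
    apply Real.rpow_nonneg; positivity
  rw [le_div_iff₀ hs1]
  linarith


/-- Effective-dimension bound: for eigenvalues `μ i = i^{-1/p}` with `p ∈ (0,1)`,
the series `∑ μ i / (μ i + λ)` converges and is bounded by `C * λ^{-p}` for all
`λ ∈ (0,1]`, with `C` depending only on `p`. -/
theorem effective_dimension_bound (p : ℝ) (hp : 0 < p) (hp1 : p < 1)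
    (μ : ℕ → ℝ) (hμ : ∀ i : ℕ, 1 ≤ i → μ i = (i : ℝ) ^ (-(1 / p))) :
    ∃ C : ℝ, 0 < C ∧ ∀ lam : ℝ, 0 < lam → lam ≤ 1 →
      Summable (fun i : ℕ => μ (i + 1) / (μ (i + 1) + lam)) ∧
      (∑' i : ℕ, μ (i + 1) / (μ (i + 1) + lam)) ≤ C * lam ^ (-p) := by
  set s : ℝ := 1 / p with hsdef
  have hs : 1 < s := by
    rw [hsdef, lt_div_iff₀ hp]; linarith
  have h1p : (0:ℝ) < 1 - p := by linarith
  refine ⟨2 + p / (1 - p), by positivity, ?_⟩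
  intro lam hlam hlam1
  have hμpos : ∀ i : ℕ, 0 < μ (i + 1) := by
    intro i
    rw [hμ (i+1) (by omega)]
    apply Real.rpow_pos_of_pos
    positivity
  have hμeq : ∀ i : ℕ, μ (i + 1) = ((i+1:ℕ):ℝ) ^ (-s) := fun i => hμ (i+1) (by omega)
  have hden : ∀ i : ℕ, 0 < μ (i + 1) + lam := fun i => by
    have := hμpos i; linarith
  have hfle1 : ∀ i : ℕ, μ (i + 1) / (μ (i + 1) + lam) ≤ 1 := by
    intro i
    rw [div_le_one (hden i)]; linarith [hμpos i]
  have hfnonneg : ∀ i : ℕ, 0 ≤ μ (i + 1) / (μ (i + 1) + lam) := fun i =>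
    div_nonneg (hμpos i).le (hden i).le
  have hfle : ∀ i : ℕ, μ (i + 1) / (μ (i + 1) + lam) ≤ ((i+1:ℕ):ℝ) ^ (-s) / lam := by
    intro i
    rw [← hμeq i]
    apply div_le_div_of_nonneg_left (hμpos i).le hlam
    linarith [hμpos i]
  have hsummand : Summable (fun i : ℕ => ((i+1:ℕ):ℝ) ^ (-s) / lam) := by
    have h1 : Summable (fun n : ℕ => (n:ℝ) ^ (-s)) :=
      Real.summable_nat_rpow.mpr (by linarith)
    exact ((summable_nat_add_iff 1).mpr h1).div_const lam
  have hsum : Summable (fun i : ℕ => μ (i + 1) / (μ (i + 1) + lam)) :=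
    Summable.of_nonneg_of_le hfnonneg hfle hsummand
  refine ⟨hsum, ?_⟩
  -- split at N
  set L : ℝ := lam ^ (-p) with hLdef
  have hLpos : 0 < L := Real.rpow_pos_of_pos hlam _
  have hL1 : (1:ℝ) ≤ L :=
    Real.one_le_rpow_of_pos_of_le_one_of_nonpos hlam hlam1 (by linarith)
  set N : ℕ := ⌈L⌉₊ with hNdef
  have hN1 : 1 ≤ N := Nat.one_le_ceil_iff.mpr hLpos
  have hNge : L ≤ (N:ℝ) := Nat.le_ceil _
  have hNle : (N:ℝ) ≤ 2 * L := by
    have := Nat.ceil_lt_add_one hLpos.le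
    linarith
  have hsplit := Summable.sum_add_tsum_nat_add N hsum
  have hhead : ∑ i ∈ Finset.range N, μ (i+1)/(μ (i+1)+lam) ≤ (N:ℝ) := by
    calc ∑ i ∈ Finset.range N, μ (i+1)/(μ (i+1)+lam)
        ≤ ∑ _i ∈ Finset.range N, (1:ℝ) := Finset.sum_le_sum (fun i _ => hfle1 i)
      _ = N := by simp
  have htail : (∑' i : ℕ, μ ((i+N)+1) / (μ ((i+N)+1) + lam)) ≤ (N:ℝ)^(1-s)/(s-1)/lam := by
    apply ((summable_nat_add_iff N).mpr hsum).tsum_le_of_sum_range_le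
    intro n
    calc ∑ i ∈ Finset.range n, μ ((i+N)+1)/(μ ((i+N)+1)+lam)
        ≤ ∑ i ∈ Finset.range n, ((i+N+1:ℕ):ℝ)^(-s)/lam := by
          apply Finset.sum_le_sum
          intro i _
          have := hfle (i+N)
          convert this using 3 <;> push_cast <;> ring
      _ = (∑ i ∈ Finset.range n, ((i+N+1:ℕ):ℝ)^(-s))/lam := by rw [Finset.sum_div]
      _ ≤ ((N:ℝ)^(1-s)/(s-1))/lam := by
          gcongr
          exact tail_sum hs hN1 n
  -- bound N^(1-s)
  have hNs : (N:ℝ)^(1-s) ≤ lam * L := by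
    have h1 : (N:ℝ)^(1-s) ≤ L^(1-s) :=
      Real.rpow_le_rpow_of_nonpos hLpos hNge (by linarith)
    have h2 : L^(1-s) = lam ^ (1-p) := by
      rw [hLdef, ← Real.rpow_mul hlam.le]
      congr 1
      have hps : p * s = 1 := by rw [hsdef]; field_simp
      linear_combination hps
    have h3 : lam ^ (1-p) = lam * L := by
      rw [hLdef, show (1:ℝ)-p = 1 + -p by ring, Real.rpow_add hlam, Real.rpow_one]
    rw [h2, h3] at h1
    exact h1
  have hs1 : (0:ℝ) < s - 1 := by linarith
  have htail2 : (∑' i : ℕ, μ ((i+N)+1) / (μ ((i+N)+1) + lam)) ≤ L * (p/(1-p)) := by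
    refine htail.trans ?_
    have : (N:ℝ)^(1-s)/(s-1)/lam ≤ (lam * L)/(s-1)/lam := by gcongr
    refine this.trans (le_of_eq ?_)
    have hseq : s - 1 = (1-p)/p := by rw [hsdef]; field_simp
    rw [hseq]
    field_simp
  rw [← hsplit]
  calc (∑ i ∈ Finset.range N, μ (i+1)/(μ (i+1)+lam)) + ∑' i : ℕ, μ ((i+N)+1) / (μ ((i+N)+1) + lam)
      ≤ 2 * L + L * (p/(1-p)) := by
        have := hhead.trans hNle
        linarith [htail2]
    _ = (2 + p / (1 - p)) * L := by ring
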